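/- Let n be a positive integer and let X_1, …, X_n be random variables on a probability space, each taking values in {0,1}, such that for every k in {1,…,n} and every event A in the σ-algebra generated by X_1, …, X_{k−1} with positive probability, P({X_k = 1} ∩ A) ≥ (1/2)·P(A). Then for every real number d, P(X_1 + ⋯ + X_n ≤ d) ≤ 2^{−n} · Σ_{j=0}^{⌊d⌋} (n choose j), where the sum is empty when d < 0. -/

import Mathlib

open MeasureTheory

private lemma pascalSum (m N : ℕ) :
    ∑ i ∈ Finset.range (N + 1), (m + 1).choose i
      = ∑ i ∈ Finset.range (N + 1), m.choose i + ∑ i ∈ Finset.range N, m.choose i := by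
  induction N with
  | zero => simp
  | succ N ih =>
    rw [Finset.sum_range_succ, ih, Nat.choose_succ_succ' m N,
      Finset.sum_range_succ (fun i => m.choose i) (N + 1),
      Finset.sum_range_succ (fun i => m.choose i) N]
    ring

private lemma chooseZeroSum (N : ℕ) :
    ∑ i ∈ Finset.range (N + 1), ((Nat.choose 0 i : ℕ) : ℝ) = 1 := by
  induction N with
  | zero => simp
  | succ N ih =>
    rw [Finset.sum_range_succ, ih, Nat.choose_eq_zero_of_lt (Nat.succ_pos N)]
    simp

/-- Stochastic-domination claim (inequality (20)) of the "bar on crashes" lemma: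
if each `{0,1}`-valued random variable `X_k` equals `1` with conditional probability at least
`1/2` given any positive-probability event in the σ-algebra generated by `X_1, …, X_{k−1}`,
then `P(X_1 + ⋯ + X_n ≤ d) ≤ 2^{−n}·Σ_{j=0}^{⌊d⌋} (n choose j)` for every real `d`
(the sum being empty when `d < 0`). -/
theorem stmt14 {Ω : Type*} [MeasurableSpace Ω] (μ : Measure Ω) [IsProbabilityMeasure μ]
    (n : ℕ) (hn : 0 < n) (X : Fin n → Ω → ℝ)
    (hmeas : ∀ k, Measurable (X k))
    (hval : ∀ k ω, X k ω = 0 ∨ X k ω = 1)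
    (hcond : ∀ k : Fin n, ∀ A : Set Ω,
      MeasurableSet[⨆ i : Fin n, ⨆ _ : (i : ℕ) < (k : ℕ),
        MeasurableSpace.comap (X i) inferInstance] A →
      0 < μ A → (1 / 2) * μ A ≤ μ ({ω | X k ω = 1} ∩ A)) :
    ∀ d : ℝ,
      μ {ω | ∑ k, X k ω ≤ d} ≤
        ENNReal.ofReal ((2 : ℝ)⁻¹ ^ n *
          ∑ j ∈ Finset.range ((⌊d⌋ + 1).toNat), (n.choose j : ℝ)) := by
  classical
  -- partial sums
  set S : ℕ → Ω → ℝ := fun m ω => ∑ i : Fin n, if (i : ℕ) < m then X i ω else 0 with hS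
  set A : ℕ → ℤ → Set Ω := fun m j => {ω | S m ω ≤ (j : ℝ)} with hA
  have hSmeas : ∀ m, Measurable (S m) := by
    intro m
    apply Finset.measurable_sum
    intro i _
    by_cases h : (i : ℕ) < m <;> simp [h, hmeas i, measurable_const]
  have hAmeas : ∀ m j, MeasurableSet (A m j) :=
    fun m j => measurableSet_le (hSmeas m) measurable_const
  -- the successor relation for partial sums
  have hSsucc : ∀ (m : ℕ) (hm : m < n) (ω : Ω),
      S (m + 1) ω = S m ω + X ⟨m, hm⟩ ω := by
    intro m hm ω
    have hterm : ∀ i : Fin n,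
        (if (i : ℕ) < m + 1 then X i ω else 0)
          = (if (i : ℕ) < m then X i ω else 0)
            + (if i = ⟨m, hm⟩ then X i ω else 0) := by
      intro i
      rcases lt_trichotomy (i : ℕ) m with h | h | h
      · have h1 : (i : ℕ) < m + 1 := by omega
        have hne : i ≠ ⟨m, hm⟩ := by
          intro e; have := congrArg Fin.val e; simp only [] at this; omega
        simp [h1, h, hne]
      · have hi : i = ⟨m, hm⟩ := Fin.ext h
        have h1 : (i : ℕ) < m + 1 := by omega
        have h2 : ¬ (i : ℕ) < m := by omega
        simp [h1, h2, hi]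
      · have h1 : ¬ (i : ℕ) < m + 1 := by omega
        have h2 : ¬ (i : ℕ) < m := by omega
        have hne : i ≠ ⟨m, hm⟩ := by
          intro e; have := congrArg Fin.val e; simp only [] at this; omega
        simp [h1, h2, hne]
    simp only [hS]
    rw [Finset.sum_congr rfl (fun i _ => hterm i), Finset.sum_add_distrib,
      Finset.sum_ite_eq' Finset.univ (⟨m, hm⟩ : Fin n) (fun i => X i ω)]
    simp
  -- G-measurability of the partial-sum events
  have hAG : ∀ (m : ℕ) (j : ℤ),
      MeasurableSet[⨆ i : Fin n, ⨆ _ : (i : ℕ) < m,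
        MeasurableSpace.comap (X i) inferInstance] (A m j) := by
    intro m j
    set G : MeasurableSpace Ω := ⨆ i : Fin n, ⨆ _ : (i : ℕ) < m,
      MeasurableSpace.comap (X i) inferInstance with hG
    have hSG : Measurable[G] (S m) := by
      apply Finset.measurable_sum
      intro i _
      by_cases h : (i : ℕ) < m
      · have hle : MeasurableSpace.comap (X i) inferInstance ≤ G := by
          rw [hG]
          exact le_iSup₂ (f := fun (i : Fin n) (_ : (i : ℕ) < m) =>
            MeasurableSpace.comap (X i) inferInstance) i h
        have hXG : Measurable[G] (X i) := Measurable.of_comap_le hle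
        simpa [h] using hXG
      · simpa [h] using (@measurable_const ℝ Ω _ G 0)
    exact hSG measurableSet_Iic
  -- key inductive step
  have key : ∀ (m : ℕ) (hm : m < n) (j : ℤ),
      (μ (A (m + 1) j)).toReal
        ≤ (1 / 2) * ((μ (A m j)).toReal + (μ (A m (j - 1))).toReal) := by
    intro m hm j
    set B : Set Ω := A m j \ A m (j - 1) with hBdef
    have hsub : A m (j - 1) ⊆ A m j := by
      intro ω hω
      have : (((j : ℤ) - 1 : ℤ) : ℝ) ≤ (j : ℝ) := by push_cast; linarith
      exact le_trans hω this
    have hBmeas : MeasurableSet B := (hAmeas m j).diff (hAmeas m (j - 1))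
    have hBG : MeasurableSet[⨆ i : Fin n, ⨆ _ : (i : ℕ) < m,
        MeasurableSpace.comap (X i) inferInstance] B :=
      MeasurableSet.diff (hAG m j) (hAG m (j - 1))
    have hX1meas : MeasurableSet {ω | X ⟨m, hm⟩ ω = 1} :=
      hmeas ⟨m, hm⟩ (measurableSet_singleton 1)
    have hX0meas : MeasurableSet {ω | X ⟨m, hm⟩ ω = 0} :=
      hmeas ⟨m, hm⟩ (measurableSet_singleton 0)
    -- split B by the value of X_m
    have hBsplit : B = ({ω | X ⟨m, hm⟩ ω = 1} ∩ B) ∪ ({ω | X ⟨m, hm⟩ ω = 0} ∩ B) := by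
      ext ω
      constructor
      · intro hω
        rcases hval ⟨m, hm⟩ ω with h | h
        · exact Or.inr ⟨h, hω⟩
        · exact Or.inl ⟨h, hω⟩
      · rintro (⟨_, hω⟩ | ⟨_, hω⟩) <;> exact hω
    have hdisj : Disjoint ({ω | X ⟨m, hm⟩ ω = 1} ∩ B) ({ω | X ⟨m, hm⟩ ω = 0} ∩ B) := by
      rw [Set.disjoint_left]
      rintro ω ⟨h1, _⟩ ⟨h0, _⟩
      simp only [Set.mem_setOf_eq] at h1 h0
      rw [h0] at h1
      norm_num at h1
    have hBadd : μ ({ω | X ⟨m, hm⟩ ω = 1} ∩ B) + μ ({ω | X ⟨m, hm⟩ ω = 0} ∩ B) = μ B := by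
      rw [← measure_union hdisj (hX0meas.inter hBmeas), ← hBsplit]
    -- conditional bound gives x0 ≤ b/2
    have hx0 : (μ ({ω | X ⟨m, hm⟩ ω = 0} ∩ B)).toReal ≤ (μ B).toReal / 2 := by
      rcases eq_or_ne (μ B) 0 with hB0 | hB0
      · have h0 : μ ({ω | X ⟨m, hm⟩ ω = 0} ∩ B) = 0 :=
          measure_mono_null Set.inter_subset_right hB0
        simp [h0, hB0]
      · have hc := hcond ⟨m, hm⟩ B hBG (pos_iff_ne_zero.mpr hB0)
        have hfin1 : μ ({ω | X ⟨m, hm⟩ ω = 1} ∩ B) ≠ ⊤ := measure_ne_top μ _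
        have hfin0 : μ ({ω | X ⟨m, hm⟩ ω = 0} ∩ B) ≠ ⊤ := measure_ne_top μ _
        have hfinB : μ B ≠ ⊤ := measure_ne_top μ _
        have hc' : (μ B).toReal / 2 ≤ (μ ({ω | X ⟨m, hm⟩ ω = 1} ∩ B)).toReal := by
          have := ENNReal.toReal_mono hfin1 hc
          rw [ENNReal.toReal_mul] at this
          simpa [ENNReal.toReal_div, div_eq_mul_inv, mul_comm] using this
        have hadd : (μ ({ω | X ⟨m, hm⟩ ω = 1} ∩ B)).toReal
            + (μ ({ω | X ⟨m, hm⟩ ω = 0} ∩ B)).toReal = (μ B).toReal := by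
          rw [← ENNReal.toReal_add hfin1 hfin0, hBadd]
        linarith
    -- decompose the event for m+1
    have hsplit : A (m + 1) j ⊆ A m (j - 1) ∪ ({ω | X ⟨m, hm⟩ ω = 0} ∩ B) := by
      intro ω hω
      have hω' : S m ω + X ⟨m, hm⟩ ω ≤ (j : ℝ) := by
        rw [← hSsucc m hm ω]; exact hω
      rcases hval ⟨m, hm⟩ ω with h0 | h1
      · by_cases hle : S m ω ≤ (((j : ℤ) - 1 : ℤ) : ℝ)
        · exact Or.inl hle
        · refine Or.inr ⟨h0, ⟨?_, hle⟩⟩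
          rw [h0] at hω'
          exact (by simpa using hω' : S m ω ≤ (j : ℝ))
      · left
        rw [h1] at hω'
        show S m ω ≤ (((j : ℤ) - 1 : ℤ) : ℝ)
        push_cast
        linarith
    have hmono : μ (A (m + 1) j) ≤ μ (A m (j - 1)) + μ ({ω | X ⟨m, hm⟩ ω = 0} ∩ B) :=
      le_trans (measure_mono hsplit) (measure_union_le _ _)
    have hmono' : (μ (A (m + 1) j)).toReal
        ≤ (μ (A m (j - 1))).toReal + (μ ({ω | X ⟨m, hm⟩ ω = 0} ∩ B)).toReal := by
      have := ENNReal.toReal_mono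
        (by exact ENNReal.add_ne_top.2 ⟨measure_ne_top μ _, measure_ne_top μ _⟩) hmono
      rwa [ENNReal.toReal_add (measure_ne_top μ _) (measure_ne_top μ _)] at this
    -- μ B = μ (A m j) - μ (A m (j-1)) in reals
    have hAB : (μ B).toReal = (μ (A m j)).toReal - (μ (A m (j - 1))).toReal := by
      have hdisj2 : Disjoint (A m (j - 1)) B := disjoint_sdiff_self_right
      have hun : A m (j - 1) ∪ B = A m j := Set.union_diff_cancel hsub
      have : μ (A m (j - 1)) + μ B = μ (A m j) := by
        rw [← measure_union hdisj2 hBmeas, hun]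
      have := congrArg ENNReal.toReal this
      rw [ENNReal.toReal_add (measure_ne_top μ _) (measure_ne_top μ _)] at this
      linarith
    linarith
  -- main induction
  have main : ∀ m : ℕ, ∀ j : ℤ, m ≤ n →
      (μ (A m j)).toReal ≤ (2 : ℝ)⁻¹ ^ m * ∑ i ∈ Finset.range (j + 1).toNat, (m.choose i : ℝ) := by
    intro m
    induction m with
    | zero =>
      intro j _
      have hS0 : ∀ ω, S 0 ω = 0 := by intro ω; simp [hS]
      by_cases hj : 0 ≤ j
      · have hAu : A 0 j = Set.univ := by
          ext ω
          simp only [hA, Set.mem_setOf_eq, Set.mem_univ, iff_true, hS0]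
          exact_mod_cast hj
        have hN : (j + 1).toNat = j.toNat + 1 := by omega
        rw [hAu, measure_univ, hN]
        simp [chooseZeroSum j.toNat]
      · have hAe : A 0 j = ∅ := by
          ext ω
          simp only [hA, Set.mem_setOf_eq, Set.mem_empty_iff_false, iff_false, hS0, not_le]
          have : j ≤ -1 := by omega
          have : (j : ℝ) ≤ -1 := by exact_mod_cast this
          linarith
        have hN : (j + 1).toNat = 0 := by omega
        rw [hAe, hN]
        simp
    | succ m ih =>
      intro j hm
      have hmn : m < n := hm
      have h1 := key m hmn j
      have h2 := ih j (le_of_lt hmn)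
      have h3 := ih (j - 1) (le_of_lt hmn)
      have hNeq : (j - 1 + 1).toNat = j.toNat := by omega
      rw [hNeq] at h3
      -- Pascal identity for the tails
      have hPascal : ∑ i ∈ Finset.range (j + 1).toNat, ((m + 1).choose i : ℝ)
          = ∑ i ∈ Finset.range (j + 1).toNat, (m.choose i : ℝ)
            + ∑ i ∈ Finset.range j.toNat, (m.choose i : ℝ) := by
        by_cases hj : 0 ≤ j
        · have hN : (j + 1).toNat = j.toNat + 1 := by omega
          rw [hN]
          exact_mod_cast pascalSum m j.toNat
        · have hN1 : (j + 1).toNat = 0 := by omega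
          have hN2 : j.toNat = 0 := by omega
          rw [hN1, hN2]
          simp
      calc (μ (A (m + 1) j)).toReal
          ≤ (1 / 2) * ((μ (A m j)).toReal + (μ (A m (j - 1))).toReal) := h1
        _ ≤ (1 / 2) * ((2 : ℝ)⁻¹ ^ m * ∑ i ∈ Finset.range (j + 1).toNat, (m.choose i : ℝ)
              + (2 : ℝ)⁻¹ ^ m * ∑ i ∈ Finset.range j.toNat, (m.choose i : ℝ)) := by
            linarith
        _ = (2 : ℝ)⁻¹ ^ (m + 1) * ∑ i ∈ Finset.range (j + 1).toNat, ((m + 1).choose i : ℝ) := by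
            rw [hPascal]
            ring
  -- conclude
  intro d
  have hsub : {ω | ∑ k, X k ω ≤ d} ⊆ A n ⌊d⌋ := by
    intro ω hω
    have hz : ∑ k, X k ω = ((∑ k : Fin n, if X k ω = 1 then (1 : ℤ) else 0 : ℤ) : ℝ) := by
      push_cast
      refine Finset.sum_congr rfl (fun k _ => ?_)
      rcases hval k ω with h | h <;> simp [h]
    have hle : ((∑ k : Fin n, if X k ω = 1 then (1 : ℤ) else 0 : ℤ) : ℝ) ≤ d := by
      rw [← hz]; exact hω
    have hzle : (∑ k : Fin n, if X k ω = 1 then (1 : ℤ) else 0 : ℤ) ≤ ⌊d⌋ :=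
      Int.le_floor.mpr hle
    show S n ω ≤ ((⌊d⌋ : ℤ) : ℝ)
    have hSn : S n ω = ∑ k, X k ω := by
      refine Finset.sum_congr rfl (fun i _ => ?_)
      simp [i.isLt]
    rw [hSn, hz]
    exact_mod_cast hzle
  have h1 : μ {ω | ∑ k, X k ω ≤ d} ≤ μ (A n ⌊d⌋) := measure_mono hsub
  have h2 := main n ⌊d⌋ le_rfl
  calc μ {ω | ∑ k, X k ω ≤ d} ≤ μ (A n ⌊d⌋) := h1
    _ = ENNReal.ofReal (μ (A n ⌊d⌋)).toReal := (ENNReal.ofReal_toReal (measure_ne_top μ _)).symm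
    _ ≤ ENNReal.ofReal ((2 : ℝ)⁻¹ ^ n * ∑ j ∈ Finset.range ((⌊d⌋ + 1).toNat), (n.choose j : ℝ)) :=
        ENNReal.ofReal_le_ofReal h2
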